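/- Let C(u₁,...,u_d) = exp(-∑_{j=1}^q (∑_{i=1}^d (-β_{ji} ln u_i)^{1/α_j})^{α_j}) with α_j ∈ (0,1], β_{ji} ≥ 0, ∑_j β_{ji} = 1 for each i. Then for any s ≠ t in {1,...,d}, the bivariate margin C_{s,t}(u,v) = C evaluated with u_s = u, u_t = v, and all other arguments 1 satisfies lim_{u→1⁻} (1 - 2u + C_{s,t}(u,u))/(1-u) = 2 - ∑_{j=1}^q (β_{js}^{1/α_j} + β_{jt}^{1/α_j})^{α_j}. -/

import Mathlib

open Real Filter

/-- bivariate upper tail dependence coefficients of the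
asymmetric logistic copula. -/
theorem stmt6 (d q : ℕ) (α : Fin q → ℝ) (hα : ∀ j, α j ∈ Set.Ioc (0:ℝ) 1)
    (β : Fin q → Fin d → ℝ) (hβ : ∀ j i, 0 ≤ β j i)
    (hβsum : ∀ i, ∑ j, β j i = 1)
    (C : (Fin d → ℝ) → ℝ)
    (hC : ∀ u : Fin d → ℝ, C u =
      Real.exp (-(∑ j, (∑ i, (-(β j i * Real.log (u i))) ^ (1/(α j))) ^ (α j))))
    (s t : Fin d) (hst : s ≠ t) :
    Tendsto (fun u : ℝ =>
      (1 - 2*u + C (fun i => if i = s then u else if i = t then u else 1))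
        / (1 - u))
      (nhdsWithin 1 (Set.Iio 1))
      (nhds (2 - ∑ j, ((β j s) ^ (1/(α j)) + (β j t) ^ (1/(α j))) ^ (α j))) := by
  set K := ∑ j, ((β j s) ^ (1/(α j)) + (β j t) ^ (1/(α j))) ^ (α j) with hK
  -- Step 1: on (0,1), the copula margin is u ^ K
  have hCval : ∀ u : ℝ, u ∈ Set.Ioo (0:ℝ) 1 →
      C (fun i => if i = s then u else if i = t then u else 1) = u ^ K := by
    intro u hu
    have hlu : Real.log u < 0 := Real.log_neg hu.1 hu.2
    have hnlu : (0:ℝ) ≤ -Real.log u := by linarith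
    rw [hC]
    have hsum : ∀ j, (∑ i, (-(β j i *
        Real.log ((fun i => if i = s then u else if i = t then u else 1) i))) ^ (1/(α j)))
        = ((β j s) ^ (1/(α j)) + (β j t) ^ (1/(α j))) * (-Real.log u) ^ (1/(α j)) := by
      intro j
      have hαj := hα j
      have h1α : (1/(α j)) ≠ 0 := one_div_ne_zero (ne_of_gt hαj.1)
      rw [Finset.sum_eq_add_of_mem s t (Finset.mem_univ s) (Finset.mem_univ t) hst ?_]
      · simp only [if_pos rfl, if_neg hst.symm, if_true, eq_self_iff_true]
        rw [show -(β j s * Real.log u) = β j s * (-Real.log u) by ring,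
            show -(β j t * Real.log u) = β j t * (-Real.log u) by ring,
            Real.mul_rpow (hβ j s) hnlu, Real.mul_rpow (hβ j t) hnlu]
        ring
      · intro c _ hc
        simp only [if_neg hc.1, if_neg hc.2, Real.log_one, mul_zero, neg_zero]
        exact Real.zero_rpow h1α
    have houter : ∀ j ∈ Finset.univ, (∑ i, (-(β j i *
        Real.log ((fun i => if i = s then u else if i = t then u else 1) i))) ^ (1/(α j))) ^ (α j)
        = ((β j s) ^ (1/(α j)) + (β j t) ^ (1/(α j))) ^ (α j) * (-Real.log u) := by
      intro j _
      have hαj := hα j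
      have hA : (0:ℝ) ≤ (β j s) ^ (1/(α j)) + (β j t) ^ (1/(α j)) :=
        add_nonneg (Real.rpow_nonneg (hβ j s) _) (Real.rpow_nonneg (hβ j t) _)
      rw [hsum j, Real.mul_rpow hA (Real.rpow_nonneg hnlu _),
          ← Real.rpow_mul hnlu, one_div_mul_cancel (ne_of_gt hαj.1), Real.rpow_one]
    rw [Finset.sum_congr rfl houter, ← Finset.sum_mul, ← hK,
        Real.rpow_def_of_pos hu.1]
    ring_nf
  -- Step 2: the limit of (1 - 2u + u^K)/(1-u)
  have hd : HasDerivAt (fun x : ℝ => x ^ K - x) (K - 1) 1 := by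
    have h := Real.hasDerivAt_rpow_const (x := (1:ℝ)) (p := K) (Or.inl one_ne_zero)
    exact (by simpa using h.sub (hasDerivAt_id (1:ℝ)) : HasDerivAt ((fun x : ℝ => x ^ K) - id) (K - 1) 1)
  have hslope : Tendsto (fun u : ℝ => (u ^ K - u) / (u - 1)) (nhdsWithin 1 {(1:ℝ)}ᶜ)
      (nhds (K - 1)) := by
    have := hasDerivAt_iff_tendsto_slope.mp hd
    refine this.congr (fun u => ?_)
    simp [slope, Real.one_rpow, div_eq_inv_mul]
  have hslope' : Tendsto (fun u : ℝ => (u ^ K - u) / (u - 1)) (nhdsWithin 1 (Set.Iio 1))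
      (nhds (K - 1)) :=
    hslope.mono_left (nhdsWithin_mono _ (fun x hx => ne_of_lt hx))
  have hlim : Tendsto (fun u : ℝ => (1 - 2*u + u ^ K) / (1 - u))
      (nhdsWithin 1 (Set.Iio 1)) (nhds (2 - K)) := by
    have h2 : Tendsto (fun u : ℝ => 1 - (u ^ K - u) / (u - 1))
        (nhdsWithin 1 (Set.Iio 1)) (nhds (1 - (K - 1))) :=
      (tendsto_const_nhds.sub hslope')
    have : (2 : ℝ) - K = 1 - (K - 1) := by ring
    rw [this]
    refine h2.congr' ?_
    filter_upwards [self_mem_nhdsWithin] with u hu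
    have hlt : u < 1 := hu
    have hne : u - 1 ≠ 0 := by intro h; exact absurd (by linarith : u = 1) (ne_of_lt hlt)
    have hne' : (1:ℝ) - u ≠ 0 := by intro h; exact absurd (by linarith : u = 1) (ne_of_lt hlt)
    field_simp
    ring
  refine hlim.congr' ?_
  have hmem : Set.Ioi (0:ℝ) ∈ nhdsWithin (1:ℝ) (Set.Iio 1) :=
    nhdsWithin_le_nhds (Ioi_mem_nhds one_pos)
  filter_upwards [hmem, self_mem_nhdsWithin] with u hu0 hu1
  rw [hCval u ⟨hu0, hu1⟩]
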